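/- Let d ≥ 1, U : Matrix (Fin d) (Fin d) ℂ arbitrary, and ρ : Matrix (Fin d) (Fin d) ℂ Hermitian. Define the Jamiolkowski operator J := Σ_{i,j ∈ Fin d} (Uᴴ * E i j * U) ⊗ₖ (E j i) and the timelike-entanglement operator T := J * (ρ ⊗ₖ 1). Then: (i) J = SWAP * (U ⊗ₖ Uᴴ); and (ii) T = ( (ρ ⊗ₖ 1) * (Uᴴ ⊗ₖ U) * SWAP )ᴴ, i.e. T equals the conjugate transpose of the two-time spacetime state ρ₀ e^{iS̃} = (ρ ⊗ 1)(U† ⊗ U)·SWAP of the spacetime formalism (with U = e^{−iεH} for the case N = 2). -/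

import Mathlib

open Matrix Complex Kronecker

/-- The SWAP operator on `ℂ^d ⊗ ℂ^d`. -/
noncomputable def swapOp (d : ℕ) : Matrix (Fin d × Fin d) (Fin d × Fin d) ℂ :=
  Matrix.of fun p q => if p.1 = q.2 ∧ p.2 = q.1 then 1 else 0

/-- The Jamiolkowski operator `J = Σ_{i,j} (U† E_{ij} U) ⊗ E_{ji}` of the channel
`Ad_U`. -/
noncomputable def jamiolkowski (d : ℕ) (U : Matrix (Fin d) (Fin d) ℂ) :
    Matrix (Fin d × Fin d) (Fin d × Fin d) ℂ :=
  ∑ i : Fin d, ∑ j : Fin d,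
    (Uᴴ * Matrix.single i j (1 : ℂ) * U) ⊗ₖ Matrix.single j i (1 : ℂ)

/-- (i) `J = SWAP (U ⊗ U†)`; (ii) the timelike-entanglement operator
`T = J (ρ ⊗ 1)` equals the conjugate transpose of the two-time spacetime state
`ρ₀ e^{iS̃} = (ρ ⊗ 1)(U† ⊗ U)·SWAP` of the spacetime formalism. -/
lemma kron_conjTranspose {d : ℕ} (A B : Matrix (Fin d) (Fin d) ℂ) :
    (A ⊗ₖ B)ᴴ = Aᴴ ⊗ₖ Bᴴ := by
  ext ⟨a,b⟩ ⟨c,e⟩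
  simp [conjTranspose_apply, kroneckerMap_apply, mul_comm]

lemma swapOp_conjTranspose (d : ℕ) : (swapOp d)ᴴ = swapOp d := by
  ext ⟨a,b⟩ ⟨c,e⟩
  simp [swapOp, conjTranspose_apply, and_comm, eq_comm]

theorem jamiolkowski_eq_spacetime_state (d : ℕ) (hd : 1 ≤ d)
    (U : Matrix (Fin d) (Fin d) ℂ)
    (ρ : Matrix (Fin d) (Fin d) ℂ) (hρ : ρ.IsHermitian) :
    jamiolkowski d U = swapOp d * (U ⊗ₖ Uᴴ) ∧
      jamiolkowski d U * (ρ ⊗ₖ (1 : Matrix (Fin d) (Fin d) ℂ)) =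
        ((ρ ⊗ₖ (1 : Matrix (Fin d) (Fin d) ℂ)) * (Uᴴ ⊗ₖ U) * swapOp d)ᴴ := by
  have h1 : jamiolkowski d U = swapOp d * (U ⊗ₖ Uᴴ) := by
    ext ⟨a,b⟩ ⟨c,e⟩
    simp only [jamiolkowski, swapOp, Matrix.sum_apply, Matrix.mul_apply,
      kroneckerMap_apply, Matrix.of_apply, conjTranspose_apply,
      Matrix.single, Matrix.of_apply]
    rw [Fintype.sum_prod_type]
    simp [Finset.mul_sum, Finset.sum_mul, ite_and]
    ring
  refine ⟨h1, ?_⟩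
  rw [h1, conjTranspose_mul, conjTranspose_mul, swapOp_conjTranspose,
    kron_conjTranspose, kron_conjTranspose,
    conjTranspose_conjTranspose, conjTranspose_one, hρ.eq, Matrix.mul_assoc]
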